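/- The class of 0-1 matrices with a linearly consistent explanation equals the class of 0-1 matrices with a voter-contains-candidate-interval explanation: A is linearly consistent if and only if there exist closed real intervals I_i for rows and J_c for columns with A[i][c] = 1 iff J_c ⊆ I_i. -/

import Mathlib

/-- `A` is linearly consistent: there is a strict linear order `r` (where `r x y` means
`x ≻ y`) on the disjoint union of rows and columns such that for rows `i ≻ j` and columns
`a ≻ b`, `A[i][b] = 1` and `A[j][a] = 1` imply `A[i][a] = 1`. -/
def IsLC {n m : ℕ} (A : Fin n → Fin m → Bool) : Prop :=
  ∃ r : (Fin n ⊕ Fin m) → (Fin n ⊕ Fin m) → Prop,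
    IsStrictTotalOrder _ r ∧
    ∀ (i j : Fin n) (a b : Fin m), r (Sum.inl i) (Sum.inl j) → r (Sum.inr a) (Sum.inr b) →
      A i b = true → A j a = true → A i a = true

/-- `A` admits a voter-contains-candidate-interval explanation. -/
def IsVCCI {n m : ℕ} (A : Fin n → Fin m → Bool) : Prop :=
  ∃ (L R : Fin n → ℝ) (l r : Fin m → ℝ),
    (∀ i, L i ≤ R i) ∧ (∀ c, l c ≤ r c) ∧
    ∀ i c, A i c = true ↔ (L i ≤ l c ∧ r c ≤ R i)


private theorem vcci_to_lc {n m : ℕ} (A : Fin n → Fin m → Bool)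
    (L R : Fin n → ℝ) (l r : Fin m → ℝ)
    (hA : ∀ i c, A i c = true ↔ (L i ≤ l c ∧ r c ≤ R i)) :
    ∃ rel : (Fin n ⊕ Fin m) → (Fin n ⊕ Fin m) → Prop,
    IsStrictTotalOrder _ rel ∧
    ∀ (i j : Fin n) (a b : Fin m), rel (Sum.inl i) (Sum.inl j) → rel (Sum.inr a) (Sum.inr b) →
      A i b = true → A j a = true → A i a = true := by
  classical
  set f : (Fin n ⊕ Fin m) → ℝ := Sum.elim L r with hf
  set g : (Fin n ⊕ Fin m) → ℕ := Sum.elim (fun i => (i : ℕ)) (fun c => n + (c : ℕ)) with hg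
  have hginj : ∀ x y, g x = g y → x = y := by
    rintro (i | c) (j | d) h <;> simp only [hg, Sum.elim_inl, Sum.elim_inr] at h
    · exact congrArg Sum.inl (Fin.ext h)
    · exact absurd h (by have := i.isLt; omega)
    · exact absurd h (by have := j.isLt; omega)
    · exact congrArg Sum.inr (Fin.ext (by omega))
  refine ⟨fun x y => f x < f y ∨ (f x = f y ∧ g x < g y), ?_, ?_⟩
  · refine { trichotomous := ?_, irrefl := ?_, trans := ?_ }
    · intro x y hxy hyx
      rcases lt_trichotomy (f x) (f y) with h | h | h
      · exact absurd (Or.inl h) hxy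
      · rcases lt_trichotomy (g x) (g y) with h' | h' | h'
        · exact absurd (Or.inr ⟨h, h'⟩) hxy
        · exact hginj _ _ h'
        · exact absurd (Or.inr ⟨h.symm, h'⟩) hyx
      · exact absurd (Or.inl h) hyx
    · intro x; simp
    · rintro x y z (h | ⟨h, h'⟩) (k | ⟨k, k'⟩)
      · exact Or.inl (h.trans k)
      · exact Or.inl (k ▸ h)
      · exact Or.inl (h ▸ k)
      · exact Or.inr ⟨h.trans k, h'.trans k'⟩
  · rintro i j a b (hij | ⟨hij, -⟩) (hab | ⟨hab, -⟩) hib hja <;>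
    · rw [hA] at hib hja ⊢
      constructor
      · calc L i ≤ L j := le_of_eq_or_lt (by tauto)
          _ ≤ l a := hja.1
      · calc r a ≤ r b := le_of_eq_or_lt (by tauto)
          _ ≤ R i := hib.2

private theorem lc_to_vcci {n m : ℕ} (A : Fin n → Fin m → Bool)
    (rel : (Fin n ⊕ Fin m) → (Fin n ⊕ Fin m) → Prop)
    (hsto : IsStrictTotalOrder _ rel)
    (hcons : ∀ (i j : Fin n) (a b : Fin m), rel (Sum.inl i) (Sum.inl j) →
      rel (Sum.inr a) (Sum.inr b) → A i b = true → A j a = true → A i a = true) :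
    ∃ (L R : Fin n → ℝ) (l r : Fin m → ℝ),
    (∀ i, L i ≤ R i) ∧ (∀ c, l c ≤ r c) ∧
    ∀ i c, A i c = true ↔ (L i ≤ l c ∧ r c ≤ R i) := by
  classical
  haveI := hsto
  set N : (Fin n ⊕ Fin m) → ℕ := fun x => (Finset.univ.filter (fun z => rel z x)).card with hN
  have hNlt : ∀ x y, rel x y → N x < N y := by
    intro x y hxy
    apply Finset.card_lt_card
    constructor
    · intro z hz
      simp only [Finset.mem_filter, Finset.mem_univ, true_and] at *
      exact trans_of rel hz hxy
    · intro hsub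
      have hx : x ∈ Finset.univ.filter (fun z => rel z y) := by simp [hxy]
      have := hsub hx
      simp only [Finset.mem_filter, Finset.mem_univ, true_and] at this
      exact irrefl_of rel x this
  have hNub : ∀ x, N x < n + m := by
    intro x
    have h1 : (Finset.univ.filter (fun z => rel z x)) ⊂ Finset.univ := by
      rw [Finset.ssubset_univ_iff]
      intro h
      have : x ∈ Finset.univ.filter (fun z => rel z x) := by rw [h]; exact Finset.mem_univ x
      simp only [Finset.mem_filter, Finset.mem_univ, true_and] at this
      exact irrefl_of rel x this
    have := Finset.card_lt_card h1
    simpa using this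
  have hNcases : ∀ x y, N x ≤ N y → x = y ∨ rel x y := by
    intro x y h
    rcases trichotomous_of rel x y with h1 | h1 | h1
    · exact Or.inr h1
    · exact Or.inl h1
    · exact absurd (hNlt y x h1) (by omega)
  set B : ℝ := ((n + m : ℕ) : ℝ) with hB
  have hB0 : (0:ℝ) ≤ B := by positivity
  set L : Fin n → ℝ := fun i => (N (Sum.inl i) : ℝ) with hL
  have hLub : ∀ i, L i < B := by
    intro i
    simp only [hL, hB]
    exact_mod_cast hNub (Sum.inl i)
  set ρ : Fin m → ℝ := fun c =>
    if ∃ j, A j c = true then B + (N (Sum.inr c) : ℝ) else 2*B + 1 with hρ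
  have hρlb : ∀ c, B ≤ ρ c := by
    intro c
    simp only [hρ]
    split
    · linarith [Nat.cast_nonneg (α := ℝ) (N (Sum.inr c))]
    · linarith
  have hρub : ∀ c, (∃ j, A j c = true) → ρ c < 2*B := by
    intro c hc
    simp only [hρ, if_pos hc]
    have : (N (Sum.inr c) : ℝ) < B := by rw [hB]; exact_mod_cast hNub (Sum.inr c)
    linarith
  set l : Fin m → ℝ := fun c =>
    if h : ∃ j, A j c = true then
      ((Finset.univ.filter (fun j => A j c = true)).sup'
        ⟨h.choose, by simp [h.choose_spec]⟩ L)
    else 2*B + 1 with hl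
  set R : Fin n → ℝ := fun i =>
    if h : ∃ c, A i c = true then
      ((Finset.univ.filter (fun c => A i c = true)).sup'
        ⟨h.choose, by simp [h.choose_spec]⟩ ρ)
    else L i with hR
  have hRub : ∀ i, R i ≤ 2*B := by
    intro i
    simp only [hR]
    split
    · next h =>
      apply Finset.sup'_le
      intro c hc
      simp only [Finset.mem_filter, Finset.mem_univ, true_and] at hc
      exact le_of_lt (hρub c ⟨i, hc⟩)
    · linarith [hLub i]
  refine ⟨L, R, l, ρ, ?_, ?_, ?_⟩
  · -- L i ≤ R i
    intro i
    simp only [hR]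
    split
    · next h =>
      obtain ⟨c, hc⟩ := h
      have hmem : c ∈ Finset.univ.filter (fun c => A i c = true) := by simp [hc]
      calc L i ≤ ρ c := le_trans (le_of_lt (hLub i)) (hρlb c)
        _ ≤ _ := Finset.le_sup' ρ hmem
    · exact le_rfl
  · -- l c ≤ ρ c
    intro c
    simp only [hl]
    split
    · next h =>
      apply le_trans (Finset.sup'_le _ _ ?_) (hρlb c)
      intro j hj
      exact le_of_lt (hLub j)
    · next h =>
      simp only [hρ, if_neg h]
      exact le_rfl
  · intro i c
    constructor
    · intro hic
      constructor
      · have hc : ∃ j, A j c = true := ⟨i, hic⟩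
        simp only [hl, dif_pos hc]
        exact Finset.le_sup' L (by simp [hic])
      · have hi : ∃ c', A i c' = true := ⟨c, hic⟩
        simp only [hR, dif_pos hi]
        exact Finset.le_sup' ρ (by simp [hic])
    · rintro ⟨h1, h2⟩
      by_contra hic
      -- S_i nonempty
      by_cases hi : ∃ c', A i c' = true
      case neg =>
        simp only [hR, dif_neg hi] at h2
        linarith [hρlb c, hLub i]
      case pos =>
      simp only [hR, dif_pos hi] at h2
      obtain ⟨b, hbmem, hbeq⟩ := Finset.exists_mem_eq_sup'
        (⟨hi.choose, by simp [hi.choose_spec]⟩ : (Finset.univ.filter (fun c => A i c = true)).Nonempty) ρ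
      rw [hbeq] at h2
      simp only [Finset.mem_filter, Finset.mem_univ, true_and] at hbmem
      -- c is nonempty
      by_cases hc : ∃ j, A j c = true
      case neg =>
        have : ρ c = 2*B + 1 := by simp [hρ, if_neg hc]
        have hb2 : ρ b < 2*B := hρub b ⟨i, hbmem⟩
        linarith
      case pos =>
      have hcb : (Sum.inr c : Fin n ⊕ Fin m) = Sum.inr b ∨ rel (Sum.inr c) (Sum.inr b) := by
        apply hNcases
        have : B + (N (Sum.inr c) : ℝ) ≤ B + (N (Sum.inr b) : ℝ) := by
          have e1 : ρ c = B + (N (Sum.inr c) : ℝ) := by simp [hρ, if_pos hc]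
          have e2 : ρ b = B + (N (Sum.inr b) : ℝ) := by simp [hρ, if_pos (⟨i, hbmem⟩ : ∃ j, A j b = true)]
          linarith [h2, e1 ▸ e2 ▸ h2]
        exact_mod_cast (by linarith : (N (Sum.inr c) : ℝ) ≤ (N (Sum.inr b) : ℝ))
      rcases hcb with hcb | hcb
      · exact hic (Sum.inr.inj hcb ▸ hbmem)
      simp only [hl, dif_pos hc] at h1
      obtain ⟨j, hjmem, hjeq⟩ := Finset.exists_mem_eq_sup'
        (⟨hc.choose, by simp [hc.choose_spec]⟩ : (Finset.univ.filter (fun j => A j c = true)).Nonempty) L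
      rw [hjeq] at h1
      simp only [Finset.mem_filter, Finset.mem_univ, true_and] at hjmem
      have hij : (Sum.inl i : Fin n ⊕ Fin m) = Sum.inl j ∨ rel (Sum.inl i) (Sum.inl j) := by
        apply hNcases
        simp only [hL] at h1
        exact_mod_cast h1
      rcases hij with hij | hij
      · exact hic (Sum.inl.inj hij ▸ hjmem)
      exact hic (hcons i j c b hij hcb hbmem hjmem)

/-- The linearly consistent matrices are exactly the voter-contains-candidate-interval
matrices. -/
theorem lc_iff_vcci {n m : ℕ} (A : Fin n → Fin m → Bool) : IsLC A ↔ IsVCCI A := by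
  constructor
  · rintro ⟨rel, hsto, hcons⟩
    exact lc_to_vcci A rel hsto hcons
  · rintro ⟨L, R, l, r, hLR, hlr, hA⟩
    exact vcci_to_lc A L R l r hA
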